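/- Let Q(t) = (1+t)(1+t²)···(1+t^{2n−1}) and let P(t) = (1+t)(1+t²)···(1+t^{s−1})·(1+t+···+t^{s−1}+2t^{s})·(1+t^{s+1})···(1+t^{2n−1}), where s is the largest power of 2 dividing 2n. Then for every i with 0 ≤ i ≤ s−1, the coefficient of tⁱ in P equals the sum of the coefficients of t⁰, t¹, …, tⁱ in Q. -/

import Mathlib

open Polynomial Finset

lemma key_mul_coeff (s i : ℕ) (hi : i < s) (C : Polynomial ℤ) :
    (C * ((∑ j ∈ range s, X ^ j) + 2 * X ^ s)).coeff i =
      ∑ j ∈ range (i + 1), C.coeff j := by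
  rw [mul_add, coeff_add]
  have h2 : (C * (2 * X ^ s)).coeff i = 0 := by
    have : C * (2 * X ^ s) = (2 * C) * X ^ s := by ring
    rw [this, coeff_mul_X_pow', if_neg (by omega)]
  rw [h2, add_zero, Finset.mul_sum, finset_sum_coeff]
  have h3 : ∀ j ∈ range s, (C * X ^ j).coeff i =
      if j ∈ range (i + 1) then C.coeff (i - j) else 0 := by
    intro j _
    simp only [coeff_mul_X_pow', Finset.mem_range, Nat.lt_succ_iff]
  rw [Finset.sum_congr rfl h3, Finset.sum_ite_mem,
    Finset.inter_eq_right.mpr (Finset.range_subset_range.mpr (by omega))]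
  rw [← Finset.sum_range_reflect]
  apply Finset.sum_congr rfl
  intro j hj
  rw [Finset.mem_range] at hj
  congr 1
  omega

/-- Coefficient identity between the mod-2 Poincaré polynomials of `SO(2n)`
and `PSO(2n)`: with `s` the largest power of 2 dividing `2n`,
`Q(t) = ∏_{j=1}^{2n-1} (1+t^j)` and
`P(t) = ∏_{j=1}^{s-1} (1+t^j) · (1+t+⋯+t^{s-1}+2t^s) · ∏_{j=s+1}^{2n-1} (1+t^j)`,
for `0 ≤ i ≤ s-1` the coefficient of `tⁱ` in `P` is the sum of the
coefficients of `t⁰,…,tⁱ` in `Q`. -/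
theorem coeff_PSO_eq_partial_sum_coeff_SO (n : ℕ) (hn : 1 ≤ n)
    (s : ℕ) (hs : s = 2 ^ ((2 * n).factorization 2))
    (Q P : Polynomial ℤ)
    (hQ : Q = ∏ j ∈ Icc 1 (2 * n - 1), (1 + X ^ j))
    (hP : P = (∏ j ∈ Icc 1 (s - 1), (1 + X ^ j)) *
        ((∑ j ∈ range s, X ^ j) + 2 * X ^ s) *
        ∏ j ∈ Icc (s + 1) (2 * n - 1), (1 + X ^ j)) :
    ∀ i ≤ s - 1, P.coeff i = ∑ j ∈ range (i + 1), Q.coeff j := by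
  intro i hi
  set A : Polynomial ℤ := ∏ j ∈ Icc 1 (s - 1), (1 + X ^ j) with hA
  set B : Polynomial ℤ := ∏ j ∈ Icc (s + 1) (2 * n - 1), (1 + X ^ j) with hB
  have hsdvd : s ∣ 2 * n := hs ▸ Nat.ordProj_dvd (2 * n) 2
  have hs1 : 1 ≤ s := hs ▸ Nat.one_le_two_pow
  have hsle : s ≤ 2 * n := Nat.le_of_dvd (by omega) hsdvd
  have hi' : i < s := by omega
  -- P.coeff i
  have hPi : P.coeff i = ∑ j ∈ range (i + 1), (A * B).coeff j := by
    rw [hP]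
    have : A * ((∑ j ∈ range s, X ^ j) + 2 * X ^ s) * B =
        (A * B) * ((∑ j ∈ range s, X ^ j) + 2 * X ^ s) := by ring
    rw [this, key_mul_coeff s i hi']
  -- Q.coeff j = (A*B).coeff j for j < s
  have hQAB : ∀ j < s, Q.coeff j = (A * B).coeff j := by
    intro j hj
    rcases eq_or_lt_of_le hsle with heq | hlt
    · have h1 : Icc (s + 1) (2 * n - 1) = ∅ := by
        rw [Finset.Icc_eq_empty_iff]; omega
      have h2 : (2 : ℕ) * n - 1 = s - 1 := by omega
      rw [hQ, hB, h1, Finset.prod_empty, mul_one, h2]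
    · -- s ≤ 2n - 1, split the product
      have hsplit : Q = A * (1 + X ^ s) * B := by
        rw [hQ, hA, hB]
        have e1 : Finset.Icc 1 (2 * n - 1) = Finset.Ioc 0 (2 * n - 1) := by
          rw [← Finset.Icc_add_one_left_eq_Ioc]; rfl
        have e2 : Finset.Icc 1 (s - 1) = Finset.Ioc 0 (s - 1) := by
          rw [← Finset.Icc_add_one_left_eq_Ioc]; rfl
        have e3 : Finset.Icc (s + 1) (2 * n - 1) = Finset.Ioc s (2 * n - 1) := by
          rw [← Finset.Icc_add_one_left_eq_Ioc]
        rw [e1, e2, e3]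
        rw [← Finset.prod_Ioc_consecutive _ (Nat.zero_le s) (by omega : s ≤ 2 * n - 1)]
        congr 1
        have : s = (s - 1) + 1 := by omega
        rw [this, Finset.prod_Ioc_succ_top (Nat.zero_le _)]
        rw [← this]
      rw [hsplit]
      have : A * (1 + X ^ s) * B = A * B + (A * B) * X ^ s := by ring
      rw [this, coeff_add, coeff_mul_X_pow', if_neg (by omega), add_zero]
  rw [hPi]
  apply Finset.sum_congr rfl
  intro j hj
  rw [Finset.mem_range] at hj
  exact (hQAB j (by omega)).symm
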